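/- Let Φ be a quantum channel and suppose ρ₁,…,ρ_n are density operators such that Φ(ρ₁),…,Φ(ρ_n) have pairwise orthogonal supports. For each i, let |ψ_i⟩ be any unit vector in the support of ρ_i. Then Φ(|ψ₁⟩⟨ψ₁|),…,Φ(|ψ_n⟩⟨ψ_n|) also have pairwise orthogonal supports. Hence α(Φ) is attained on pure states. -/

import Mathlib

open Matrix ComplexOrder

/-- A density operator: positive semidefinite with trace 1. -/
def IsDensity {n : ℕ} (ρ : Matrix (Fin n) (Fin n) ℂ) : Prop :=
  ρ.PosSemidef ∧ ρ.trace = 1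

/-- The outer product `|ψ⟩⟨ψ|`. -/
def outer {n : ℕ} (ψ : Fin n → ℂ) : Matrix (Fin n) (Fin n) ℂ :=
  vecMulVec ψ (star ψ)

/-- The channel with Kraus operators `E k`. -/
noncomputable def krausChannel {n r : ℕ} (E : Fin r → Matrix (Fin n) (Fin n) ℂ)
    (ρ : Matrix (Fin n) (Fin n) ℂ) : Matrix (Fin n) (Fin n) ℂ :=
  ∑ k, E k * ρ * (E k)ᴴ

/-- Two operators have orthogonal supports. -/
def OrthSupports {n : ℕ} (A B : Matrix (Fin n) (Fin n) ℂ) : Prop :=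
  ∀ x y : Fin n → ℂ, star (A.mulVec x) ⬝ᵥ (B.mulVec y) = 0

private lemma trace_ct_mul_self_nonneg {a b : ℕ} (M : Matrix (Fin a) (Fin b) ℂ) :
    0 ≤ (Mᴴ * M).trace := by
  rw [Matrix.trace]
  refine Finset.sum_nonneg fun j _ => ?_
  have h : (Mᴴ * M).diag j = dotProduct (star (fun i => M i j)) (fun i => M i j) := by
    simp [Matrix.diag, Matrix.mul_apply, dotProduct]
  rw [h]
  exact dotProduct_star_self_nonneg _

private lemma trace_ct_mul_self_eq_zero {a b : ℕ} {M : Matrix (Fin a) (Fin b) ℂ}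
    (h : (Mᴴ * M).trace = 0) : M = 0 := by
  rw [Matrix.trace] at h
  have hz := (Finset.sum_eq_zero_iff_of_nonneg (fun j _ => by
    have h : (Mᴴ * M).diag j = dotProduct (star (fun i => M i j)) (fun i => M i j) := by
      simp [Matrix.diag, Matrix.mul_apply, dotProduct]
    rw [h]; exact dotProduct_star_self_nonneg _)).1 h
  ext i j
  have h2 : dotProduct (star (fun i => M i j)) (fun i => M i j) = 0 := by
    simpa [Matrix.diag, Matrix.mul_apply, dotProduct] using hz j (Finset.mem_univ j)
  exact congrFun (dotProduct_star_self_eq_zero.1 h2) i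

private lemma vecMulVec_mul' {a : ℕ} (u b : Fin a → ℂ) (M : Matrix (Fin a) (Fin a) ℂ) :
    vecMulVec u b * M = vecMulVec u (M.vecMul b) := by
  ext s t
  simp [vecMulVec_apply, Matrix.mul_apply, Matrix.vecMul, dotProduct, Finset.mul_sum, mul_assoc]

private lemma vecMul_vecMulVec' {a : ℕ} (b c d : Fin a → ℂ) :
    Matrix.vecMul b (vecMulVec c d) = (b ⬝ᵥ c) • d := by
  ext t
  simp [Matrix.vecMul, vecMulVec_apply, dotProduct, Finset.sum_mul, mul_assoc]

private lemma outer_herm {a : ℕ} (ψ : Fin a → ℂ) : (outer ψ)ᴴ = outer ψ := by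
  ext s t
  simp [outer, vecMulVec_apply, Matrix.conjTranspose_apply, mul_comm]

theorem alpha_attained_on_pure_states
    {n r m : ℕ} (E : Fin r → Matrix (Fin n) (Fin n) ℂ)
    (hE : ∑ k, (E k)ᴴ * E k = 1)
    (ρ : Fin m → Matrix (Fin n) (Fin n) ℂ) (hρ : ∀ i, IsDensity (ρ i))
    (horth : ∀ i j, i ≠ j →
      OrthSupports (krausChannel E (ρ i)) (krausChannel E (ρ j)))
    (ψ : Fin m → (Fin n → ℂ)) (hunit : ∀ i, star (ψ i) ⬝ᵥ ψ i = 1)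
    (hsupp : ∀ i, ∃ v : Fin n → ℂ, (ρ i).mulVec v = ψ i) :
    ∀ i j, i ≠ j →
      OrthSupports (krausChannel E (outer (ψ i))) (krausChannel E (outer (ψ j))) := by
  intro i j hij
  set A := krausChannel E (ρ i) with hAdef
  set B := krausChannel E (ρ j) with hBdef
  have hρiH : (ρ i)ᴴ = ρ i := (hρ i).1.1
  have hρjH : (ρ j)ᴴ = ρ j := (hρ j).1.1
  -- Step 1: Aᴴ * B = 0
  have hAB : Aᴴ * B = 0 := by
    ext s t
    have h0 := horth i j hij (Pi.single s 1) (Pi.single t 1)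
    have h1 : (Aᴴ * B) s t =
        star (A.mulVec (Pi.single s 1)) ⬝ᵥ (B.mulVec (Pi.single t 1)) := by
      simp [Matrix.mul_apply, Matrix.mulVec_single_one, dotProduct,
        Matrix.conjTranspose_apply]
    rw [h1, h0]
    simp
  -- A is Hermitian
  have hAH : Aᴴ = A := by
    simp [hAdef, krausChannel, Matrix.conjTranspose_sum, Matrix.conjTranspose_mul, hρiH, Matrix.mul_assoc]
  -- square roots
  open scoped MatrixOrder in
  obtain ⟨S, hS, hSH⟩ : ∃ S : Matrix (Fin n) (Fin n) ℂ, S * S = ρ i ∧ Sᴴ = S :=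
    ⟨CFC.sqrt (ρ i), CFC.sqrt_mul_sqrt_self _ (hρ i).1.nonneg,
      (CFC.sqrt_nonneg (ρ i)).posSemidef.1⟩
  open scoped MatrixOrder in
  obtain ⟨T, hT, hTH⟩ : ∃ T : Matrix (Fin n) (Fin n) ℂ, T * T = ρ j ∧ Tᴴ = T :=
    ⟨CFC.sqrt (ρ j), CFC.sqrt_mul_sqrt_self _ (hρ j).1.nonneg,
      (CFC.sqrt_nonneg (ρ j)).posSemidef.1⟩
  set M : Fin r → Fin r → Matrix (Fin n) (Fin n) ℂ :=
    fun k l => S * (E k)ᴴ * E l * T with hMdef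
  have hMH : ∀ k l, (M k l)ᴴ = T * (E l)ᴴ * E k * S := by
    intro k l
    simp [hMdef, Matrix.conjTranspose_mul, hSH, hTH, Matrix.mul_assoc]
  -- Step 2: trace of each cross term vanishes
  have htr : ∑ k, ∑ l, ((M k l)ᴴ * M k l).trace = 0 := by
    have hABsum : Aᴴ * B = ∑ k, ∑ l,
        (E k * ρ i * (E k)ᴴ) * (E l * ρ j * (E l)ᴴ) := by
      rw [hAH, hAdef, hBdef, krausChannel, krausChannel, Finset.sum_mul_sum]
    have e : ∀ k l, ((E k * ρ i * (E k)ᴴ) * (E l * ρ j * (E l)ᴴ)).trace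
        = ((M k l)ᴴ * M k l).trace := by
      intro k l
      have e1 : (E k * ρ i * (E k)ᴴ) * (E l * ρ j * (E l)ᴴ) =
          (E k * S) * (S * (E k)ᴴ * E l * T * T * (E l)ᴴ) := by
        rw [← hS, ← hT]; simp only [Matrix.mul_assoc]
      have e2 : (S * (E k)ᴴ * E l * T * T * (E l)ᴴ) * (E k * S) =
          (M k l) * (M k l)ᴴ := by
        rw [hMH, hMdef]; simp only [Matrix.mul_assoc]
      rw [e1, Matrix.trace_mul_comm, e2, Matrix.trace_mul_comm]
    calc ∑ k, ∑ l, ((M k l)ᴴ * M k l).trace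
        = ∑ k, ∑ l, ((E k * ρ i * (E k)ᴴ) * (E l * ρ j * (E l)ᴴ)).trace := by
          refine Finset.sum_congr rfl fun k _ => Finset.sum_congr rfl fun l _ => (e k l).symm
      _ = (Aᴴ * B).trace := by rw [hABsum]; simp [Matrix.trace_sum]
      _ = 0 := by rw [hAB]; simp
  have hM0 : ∀ k l, M k l = 0 := by
    have h1 := (Finset.sum_eq_zero_iff_of_nonneg (fun k _ =>
      Finset.sum_nonneg fun l _ => trace_ct_mul_self_nonneg (M k l))).1 htr
    intro k l
    have h2 := (Finset.sum_eq_zero_iff_of_nonneg (fun l _ =>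
      trace_ct_mul_self_nonneg (M k l))).1 (h1 k (Finset.mem_univ k)) l (Finset.mem_univ l)
    exact trace_ct_mul_self_eq_zero h2
  -- Step 3: ρ i * (E k)ᴴ * E l * ρ j = 0
  have key : ∀ k l, ρ i * (E k)ᴴ * E l * ρ j = 0 := by
    intro k l
    calc ρ i * (E k)ᴴ * E l * ρ j = S * M k l * T := by
          rw [hMdef, ← hS, ← hT]; simp only [Matrix.mul_assoc]
      _ = 0 := by rw [hM0 k l]; simp
  -- Step 4: the scalar vanishes
  have hscalar : ∀ k l, star (ψ i) ⬝ᵥ ((E k)ᴴ * E l).mulVec (ψ j) = 0 := by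
    intro k l
    obtain ⟨v, hv⟩ := hsupp i
    obtain ⟨w, hw⟩ := hsupp j
    rw [← hv, ← hw, star_mulVec, hρiH, Matrix.mulVec_mulVec, Matrix.dotProduct_mulVec,
      Matrix.vecMul_vecMul]
    simp only [← Matrix.mul_assoc]
    rw [key k l]
    simp
  -- Step 5: outer ψ i * Q * outer ψ j = 0
  have hPQP : ∀ k l, outer (ψ i) * ((E k)ᴴ * E l) * outer (ψ j) = 0 := by
    intro k l
    rw [outer, outer, vecMulVec_mul', vecMulVec_mul', vecMul_vecMulVec']
    have hsc : (((E k)ᴴ * E l).vecMul (star (ψ i))) ⬝ᵥ ψ j = 0 := by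
      rw [← Matrix.dotProduct_mulVec]; exact hscalar k l
    rw [hsc]
    ext s t
    simp [vecMulVec_apply]
  -- Step 6: conclude
  have hCD : (krausChannel E (outer (ψ i)))ᴴ * krausChannel E (outer (ψ j)) = 0 := by
    have hCH : (krausChannel E (outer (ψ i)))ᴴ = krausChannel E (outer (ψ i)) := by
      simp [krausChannel, Matrix.conjTranspose_sum, Matrix.conjTranspose_mul, outer_herm, Matrix.mul_assoc]
    rw [hCH, krausChannel, krausChannel, Finset.sum_mul_sum]
    refine Finset.sum_eq_zero fun k _ => Finset.sum_eq_zero fun l _ => ?_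
    calc (E k * outer (ψ i) * (E k)ᴴ) * (E l * outer (ψ j) * (E l)ᴴ)
        = E k * (outer (ψ i) * ((E k)ᴴ * E l) * outer (ψ j)) * (E l)ᴴ := by
          simp only [Matrix.mul_assoc]
      _ = 0 := by rw [hPQP k l]; simp
  intro x y
  rw [star_mulVec, Matrix.dotProduct_mulVec, Matrix.vecMul_vecMul, hCD]
  simp
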